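/- Define φ(k) = 1/(2^{1/k} − 1) − k + 1 for real k > 0. Then for every real k ≥ 1, (1/ln 2 − 1)·k + 1/2 < φ(k) ≤ (1/ln 2 − 1)·k + 2 − 1/ln 2, with equality in the upper bound exactly when k = 1. -/

import Mathlib

private lemma aux_exp (x : ℝ) (hx : x ≠ 0) : (1 - x) * Real.exp x < 1 := by
  have h := Real.add_one_lt_exp (x := -x) (by simpa using hx)
  rw [Real.exp_neg] at h
  have hpos := Real.exp_pos x
  calc (1 - x) * Real.exp x < (Real.exp x)⁻¹ * Real.exp x := by
        apply mul_lt_mul_of_pos_right _ hpos; linarith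
    _ = 1 := inv_mul_cancel₀ (ne_of_gt hpos)

private lemma g_pos (x : ℝ) (hx : 0 < x) : (2 - x) * Real.exp x < 2 + x := by
  have hderiv : ∀ t : ℝ, HasDerivAt (fun t : ℝ => 2 + t - (2 - t) * Real.exp t)
      (1 - (1 - t) * Real.exp t) t := by
    intro t
    have h1 : HasDerivAt (fun t : ℝ => 2 + t) 1 t := by
      simpa using (hasDerivAt_id t).const_add (2 : ℝ)
    have h2 : HasDerivAt (fun t : ℝ => (2 - t) * Real.exp t)
        ((-1) * Real.exp t + (2 - t) * Real.exp t) t := by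
      exact (((hasDerivAt_id t).const_sub (2 : ℝ)).mul (Real.hasDerivAt_exp t))
    have h3 : HasDerivAt (fun t : ℝ => 2 + t - (2 - t) * Real.exp t)
        (1 - ((-1) * Real.exp t + (2 - t) * Real.exp t)) t := h1.sub h2
    convert h3 using 1
    ring
  have hmono : StrictMonoOn (fun t : ℝ => 2 + t - (2 - t) * Real.exp t) (Set.Ici 0) := by
    apply strictMonoOn_of_deriv_pos (convex_Ici 0)
    · exact (((continuous_const.add continuous_id).sub
        ((continuous_const.sub continuous_id).mul Real.continuous_exp)).continuousOn)
    · intro t ht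
      rw [interior_Ici] at ht
      rw [(hderiv t).deriv]
      have := aux_exp t (ne_of_gt ht)
      linarith
  have h0 := hmono (Set.self_mem_Ici) (Set.mem_Ici.mpr hx.le) hx
  simp [Real.exp_zero] at h0
  linarith

private lemma lower_aux (x : ℝ) (hx : 0 < x) (hx2 : x < 2) :
    1 / x - 1 / 2 < 1 / (Real.exp x - 1) := by
  have hex : 0 < Real.exp x - 1 := by
    linarith [Real.add_one_lt_exp (ne_of_gt hx)]
  have hg := g_pos x hx
  rw [div_sub_div _ _ (ne_of_gt hx) (by norm_num), div_lt_div_iff₀ (by positivity) hex]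
  nlinarith [hg, Real.exp_pos x]

private lemma f_anti : StrictAntiOn (fun x : ℝ => 1 / x - 1 / (Real.exp x - 1)) (Set.Ioi 0) := by
  have hex : ∀ t : ℝ, 0 < t → 0 < Real.exp t - 1 := by
    intro t ht
    linarith [Real.add_one_lt_exp (ne_of_gt ht)]
  apply strictAntiOn_of_deriv_neg (convex_Ioi 0)
  · apply ContinuousOn.sub
    · exact continuousOn_const.div continuousOn_id (fun t ht => ne_of_gt (Set.mem_Ioi.mp ht))
    · exact continuousOn_const.div (Real.continuous_exp.continuousOn.sub continuousOn_const)
        (fun t ht => ne_of_gt (hex t (Set.mem_Ioi.mp ht)))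
  · intro t ht
    rw [interior_Ioi] at ht
    have ht0 : 0 < t := Set.mem_Ioi.mp ht
    have het := hex t ht0
    have hd : HasDerivAt (fun x : ℝ => 1 / x - 1 / (Real.exp x - 1))
        (-(t ^ 2)⁻¹ - (-Real.exp t / (Real.exp t - 1) ^ 2)) t := by
      have h1 : HasDerivAt (fun x : ℝ => 1 / x) (-(t ^ 2)⁻¹) t := by
        simpa [one_div] using hasDerivAt_inv (ne_of_gt ht0)
      have h2 : HasDerivAt (fun x : ℝ => 1 / (Real.exp x - 1))
          (-Real.exp t / (Real.exp t - 1) ^ 2) t := by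
        have := ((Real.hasDerivAt_exp t).sub_const 1).inv (ne_of_gt het)
        simp only [one_div]; exact this
      exact h1.sub h2
    rw [hd.deriv]
    -- need: exp t / (exp t - 1)^2 < (t^2)⁻¹, i.e. t^2 * exp t < (exp t - 1)^2
    have hkey : t * Real.exp (t / 2) < Real.exp t - 1 := by
      have hs : t / 2 < Real.sinh (t / 2) := Real.self_lt_sinh_iff.mpr (by linarith)
      rw [Real.sinh_eq] at hs
      have hp : 0 < Real.exp (t / 2) := Real.exp_pos _
      have h' : t < Real.exp (t / 2) - Real.exp (-(t / 2)) := by linarith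
      have := mul_lt_mul_of_pos_right h' hp
      have he1 : Real.exp (t / 2) * Real.exp (t / 2) = Real.exp t := by
        rw [← Real.exp_add]; ring_nf
      have he2 : Real.exp (-(t / 2)) * Real.exp (t / 2) = 1 := by
        rw [← Real.exp_add]; simp
      nlinarith
    have hsq : t ^ 2 * Real.exp t < (Real.exp t - 1) ^ 2 := by
      have h1 : 0 ≤ t * Real.exp (t / 2) := by positivity
      have h2 : (t * Real.exp (t / 2)) ^ 2 < (Real.exp t - 1) ^ 2 := by
        apply pow_lt_pow_left₀ hkey h1
        norm_num
      have he1 : Real.exp (t / 2) * Real.exp (t / 2) = Real.exp t := by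
        rw [← Real.exp_add]; ring_nf
      nlinarith
    have hlt : Real.exp t / (Real.exp t - 1) ^ 2 < (t ^ 2)⁻¹ := by
      rw [div_lt_iff₀ (by positivity), inv_mul_eq_div, lt_div_iff₀ (by positivity)]
      nlinarith
    have heq2 : -(t ^ 2)⁻¹ - (-Real.exp t / (Real.exp t - 1) ^ 2)
        = Real.exp t / (Real.exp t - 1) ^ 2 - (t ^ 2)⁻¹ := by ring
    rw [heq2]
    linarith

theorem phi_bounds (k : ℝ) (hk : 1 ≤ k) :
    let φ : ℝ → ℝ := fun k => 1 / ((2 : ℝ) ^ (1 / k) - 1) - k + 1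
    (1 / Real.log 2 - 1) * k + 1 / 2 < φ k ∧
    φ k ≤ (1 / Real.log 2 - 1) * k + 2 - 1 / Real.log 2 ∧
    (φ k = (1 / Real.log 2 - 1) * k + 2 - 1 / Real.log 2 ↔ k = 1) := by
  intro φ
  have hk0 : 0 < k := lt_of_lt_of_le one_pos hk
  set L := Real.log 2 with hLdef
  have hL : 0 < L := Real.log_pos (by norm_num)
  have hL1 : L < 1 := by
    have := Real.log_two_lt_d9
    rw [hLdef]; linarith
  set x := L / k with hxdef
  have hx : 0 < x := div_pos hL hk0
  have hxle : x ≤ L := div_le_self hL.le hk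
  have hx2 : x < 2 := by linarith
  have h2k : (2 : ℝ) ^ (1 / k) = Real.exp x := by
    rw [Real.rpow_def_of_pos (by norm_num : (0:ℝ) < 2)]
    congr 1
    rw [hxdef, hLdef]; ring
  have hex : 0 < Real.exp x - 1 := by
    linarith [Real.add_one_lt_exp (ne_of_gt hx)]
  have hφ : φ k = 1 / (Real.exp x - 1) - k + 1 := by
    simp only [φ, h2k]
  have hkL : (1 / L) * k = 1 / x := by
    rw [hxdef]; field_simp
  have hexpL : Real.exp L = 2 := Real.exp_log (by norm_num)
  -- f at L
  have hfL : 1 / L - 1 / (Real.exp L - 1) = 1 / L - 1 := by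
    rw [hexpL]; norm_num
  constructor
  · -- lower bound
    have hlow := lower_aux x hx hx2
    rw [hφ]
    have : (1 / L - 1) * k = 1 / x - k := by
      rw [mul_comm (1/L - 1) k, mul_sub, mul_one, mul_comm k (1/L), hkL]
    rw [this]
    linarith
  · have hupkey : ∀ hxlt : x < L,
        1 / L - 1 < 1 / x - 1 / (Real.exp x - 1) := by
      intro hxlt
      have h' : 1 / L - 1 / (Real.exp L - 1) < 1 / x - 1 / (Real.exp x - 1) :=
        f_anti (Set.mem_Ioi.mpr hx) (Set.mem_Ioi.mpr hL) hxlt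
      linarith [hfL, h']
    have heqform : (1 / L - 1) * k + 2 - 1 / L = 1 / x - k + 2 - 1 / L := by
      rw [mul_comm (1/L - 1) k, mul_sub, mul_one, mul_comm k (1/L), hkL]
    constructor
    · -- upper bound
      rw [hφ, heqform]
      rcases eq_or_lt_of_le hxle with h | h
      · rw [h, hexpL]; norm_num; linarith
      · have := hupkey h
        linarith
    · constructor
      · intro heq
        by_contra hne
        have hk1 : 1 < k := lt_of_le_of_ne hk (Ne.symm hne)
        have hxlt : x < L := by
          rw [hxdef]
          exact div_lt_self hL hk1
        have := hupkey hxlt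
        rw [hφ, heqform] at heq
        linarith
      · intro heq
        subst heq
        have hxL : x = L := by rw [hxdef]; field_simp
        rw [hφ, hxL, hexpL]
        norm_num
        linarith
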